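/- Let [n] = {0, 1, ..., n} be a finite pointed set with basepoint 0. For a subset A of [n] containing 0, let e_A: [n] → [n] be the idempotent pointed map with e_A(j) = j if j ∈ A and e_A(j) = 0 otherwise. Define f_A = Σ_{B ⊆ A, 0 ∈ B} (-1)^{|A \ B|} e_B in the monoid ring ℤ[End([n])] of pointed endomorphisms of [n]. Then the f_A (over all subsets A containing 0) are pairwise orthogonal idempotents whose sum is the identity. -/

import Mathlib

open Finset

/-- The monoid of pointed endomorphisms of the pointed set `[n] = {0,…,n}`
(maps sending the basepoint `0` to `0`), as a submonoid of `Function.End`. -/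
def PEnd (n : ℕ) : Submonoid (Function.End (Fin (n + 1))) where
  carrier := {f | f 0 = 0}
  one_mem' := rfl
  mul_mem' := by
    intro f g hf hg
    show f (g 0) = 0
    rw [hg, hf]

/-- The idempotent `e_A : [n] → [n]` associated to a subset `A ⊆ [n]`:
`e_A(j) = j` if `j ∈ A`, and `e_A(j) = 0` otherwise, viewed as a basis element
of the monoid ring `ℤ[End([n])]`. -/
noncomputable def eElt (n : ℕ) (A : Finset (Fin (n + 1))) :
    MonoidAlgebra ℤ (PEnd n) :=
  MonoidAlgebra.of ℤ (PEnd n)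
    ⟨fun j => if j ∈ A then j else 0, show (if (0 : Fin (n+1)) ∈ A then (0 : Fin (n+1)) else 0) = 0 by
      by_cases h : (0 : Fin (n + 1)) ∈ A <;> simp [h]⟩

/-- The element `f_A = ∑_{B ⊆ A, 0 ∈ B} (-1)^{|A \ B|} e_B ∈ ℤ[End([n])]`. -/
noncomputable def fElt (n : ℕ) (A : Finset (Fin (n + 1))) :
    MonoidAlgebra ℤ (PEnd n) :=
  ∑ B ∈ A.powerset.filter (fun B => (0 : Fin (n + 1)) ∈ B),
    ((-1 : ℤ) ^ ((A \ B).card)) • eElt n B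

lemma eElt_mul (n : ℕ) (A B : Finset (Fin (n + 1))) :
    eElt n A * eElt n B = eElt n (A ∩ B) := by
  unfold eElt
  rw [← map_mul]
  congr 1
  apply Subtype.ext
  funext j
  show (if (if j ∈ B then j else 0) ∈ A then (if j ∈ B then j else 0) else 0)
      = (if j ∈ A ∩ B then j else 0)
  by_cases hB : j ∈ B <;> by_cases hA : j ∈ A <;> simp [hA, hB]

lemma eElt_univ (n : ℕ) : eElt n univ = 1 := by
  have h : (⟨fun j => if j ∈ (univ : Finset (Fin (n+1))) then j else 0, by simp; rfl⟩ : PEnd n) = 1 :=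
    Subtype.ext (funext fun j => by simp; rfl)
  unfold eElt
  rw [h, map_one]

lemma sdiff_card_toggle {n : ℕ} {A B : Finset (Fin (n+1))} {i : Fin (n+1)}
    (hiA : i ∈ A) (hiB : i ∉ B) : (A \ B).card = (A \ insert i B).card + 1 := by
  have h : A \ B = insert i (A \ insert i B) := by
    ext x
    by_cases hx : x = i <;> simp [hx, hiA, hiB, mem_sdiff, mem_insert]
  rw [h, card_insert_of_notMem (by simp)]

lemma sum_sign_smul_eq_zero {n : ℕ} {M : Type*} [AddCommGroup M]
    (A : Finset (Fin (n+1))) (x : Finset (Fin (n+1)) → M) (i : Fin (n+1))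
    (hiA : i ∈ A) (hi0 : i ≠ 0)
    (hx : ∀ B, i ∉ B → x (insert i B) = x B) :
    ∑ B ∈ A.powerset.filter (fun B => (0:Fin (n+1)) ∈ B),
      ((-1:ℤ) ^ ((A \ B).card)) • x B = 0 := by
  apply Finset.sum_involution (fun B _ => if i ∈ B then B.erase i else insert i B)
  · intro B hB
    by_cases hiB : i ∈ B
    · simp only [hiB, if_true]
      have hie : i ∉ B.erase i := notMem_erase _ _
      have hins : insert i (B.erase i) = B := insert_erase hiB
      have hc : (A \ B.erase i).card = (A \ B).card + 1 := by
        have := sdiff_card_toggle (A := A) hiA hie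
        rwa [hins] at this
      have hxe : x (B.erase i) = x B := by
        conv_rhs => rw [← hins]
        exact (hx _ hie).symm
      rw [hc, hxe, pow_succ, ← add_smul]
      simp
    · simp only [hiB, if_false]
      rw [sdiff_card_toggle hiA hiB, hx B hiB, pow_succ, ← add_smul]
      simp
  · intro B hB _
    by_cases hiB : i ∈ B <;> simp only [hiB, if_true, if_false]
    · intro h
      apply notMem_erase i B
      rw [h]; exact hiB
    · intro h
      apply hiB
      rw [← h]; exact mem_insert_self i B
  · intro B hB
    by_cases hiB : i ∈ B
    · simp [hiB, notMem_erase, insert_erase hiB]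
    · simp [hiB, mem_insert_self, erase_insert hiB]
  · intro B hB
    simp only [mem_filter, mem_powerset] at hB
    by_cases hiB : i ∈ B <;> simp only [hiB, if_true, if_false, mem_filter, mem_powerset,
      mem_erase, mem_insert]
    · exact ⟨(erase_subset _ _).trans hB.1, fun h => hi0 h.symm, hB.2⟩
    · exact ⟨insert_subset hiA hB.1, Or.inr hB.2⟩

lemma eElt_mul_fElt {n : ℕ} (A C : Finset (Fin (n+1))) (h0A : (0:Fin (n+1)) ∈ A)
    (h0C : (0:Fin (n+1)) ∈ C) :
    eElt n C * fElt n A = if A ⊆ C then fElt n A else 0 := by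
  simp only [fElt, Finset.mul_sum]
  simp_rw [mul_smul_comm, eElt_mul]
  split_ifs with h
  · apply Finset.sum_congr rfl
    intro B hB
    simp only [mem_filter, mem_powerset] at hB
    rw [inter_eq_right.mpr (hB.1.trans h)]
  · obtain ⟨i, hiA, hiC⟩ := not_subset.1 h
    exact sum_sign_smul_eq_zero A (fun B => eElt n (C ∩ B)) i hiA
      (fun h0 => hiC (h0 ▸ h0C))
      (fun B hiB => by
        show eElt n (C ∩ insert i B) = eElt n (C ∩ B)
        rw [inter_comm C (insert i B), insert_inter_of_notMem hiC, inter_comm])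

lemma sign_sum_eq {n : ℕ} (A B : Finset (Fin (n+1))) :
    ∑ C ∈ B.powerset.filter (fun C => A ⊆ C), (-1:ℤ) ^ ((B \ C).card)
      = if A = B then 1 else 0 := by
  by_cases hAB : A ⊆ B
  · have key : ∑ C ∈ B.powerset.filter (fun C => A ⊆ C), (-1:ℤ) ^ ((B \ C).card)
        = ∑ m ∈ (B \ A).powerset, (-1:ℤ) ^ m.card := by
      apply Finset.sum_nbij' (fun C => B \ C) (fun D => B \ D)
      · intro C hC
        simp only [mem_filter, mem_powerset] at hC
        simp only [mem_powerset]
        exact sdiff_le_sdiff le_rfl hC.2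
      · intro D hD
        simp only [mem_powerset] at hD
        simp only [mem_filter, mem_powerset]
        refine ⟨sdiff_subset, ?_⟩
        intro x hx
        simp only [mem_sdiff]
        exact ⟨hAB hx, fun hxD => (mem_sdiff.1 (hD hxD)).2 hx⟩
      · intro C hC
        simp only [mem_filter, mem_powerset] at hC
        exact Finset.sdiff_sdiff_eq_self hC.1
      · intro D hD
        simp only [mem_powerset] at hD
        exact Finset.sdiff_sdiff_eq_self (hD.trans sdiff_subset)
      · intro C hC
        rfl
    rw [key, Finset.sum_powerset_neg_one_pow_card]
    by_cases h : A = B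
    · subst h
      simp
    · rw [if_neg h, if_neg]
      rw [sdiff_eq_empty_iff_subset]
      exact fun hBA => h (le_antisymm hAB hBA)
  · rw [if_neg (fun h => hAB (le_of_eq h)), Finset.sum_eq_zero]
    intro C hC
    simp only [mem_filter, mem_powerset] at hC
    exact absurd (hC.2.trans hC.1) hAB

lemma fElt_mul_fElt {n : ℕ} (A B : Finset (Fin (n+1))) (h0A : (0:Fin (n+1)) ∈ A)
    (h0B : (0:Fin (n+1)) ∈ B) :
    fElt n B * fElt n A = if A = B then fElt n A else 0 := by
  conv_lhs => rw [fElt, Finset.sum_mul]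
  have step : ∀ C ∈ B.powerset.filter (fun C => (0:Fin (n+1)) ∈ C),
      ((-1:ℤ) ^ ((B \ C).card)) • eElt n C * fElt n A
        = (if A ⊆ C then ((-1:ℤ) ^ ((B \ C).card)) else 0) • fElt n A := by
    intro C hC
    simp only [mem_filter, mem_powerset] at hC
    rw [smul_mul_assoc, eElt_mul_fElt A C h0A hC.2]
    split_ifs with h
    · rfl
    · simp
  rw [Finset.sum_congr rfl step, ← Finset.sum_smul, ← Finset.sum_filter,
    Finset.filter_filter]
  have hf : B.powerset.filter (fun C => (0:Fin (n+1)) ∈ C ∧ A ⊆ C)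
      = B.powerset.filter (fun C => A ⊆ C) := by
    apply Finset.filter_congr
    intro C _
    exact ⟨fun h => h.2, fun h => ⟨h h0A, h⟩⟩
  rw [hf, sign_sum_eq A B]
  split_ifs with h
  · simp
  · simp

lemma fElt_eq_univ_sum {n : ℕ} (A : Finset (Fin (n+1))) :
    fElt n A = ∑ B ∈ univ.filter (fun B => (0:Fin (n+1)) ∈ B),
      (if B ⊆ A then ((-1:ℤ) ^ ((A \ B).card)) else 0) • eElt n B := by
  simp_rw [ite_smul, zero_smul]
  rw [← Finset.sum_filter, Finset.filter_filter, fElt]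
  apply Finset.sum_congr
  · ext B
    simp only [mem_filter, mem_powerset, mem_univ, true_and]
    exact and_comm
  · intros; rfl

lemma sum_fElt {n : ℕ} :
    ∑ A ∈ Finset.univ.filter (fun A : Finset (Fin (n + 1)) =>
        (0 : Fin (n + 1)) ∈ A), fElt n A = 1 := by
  simp_rw [fElt_eq_univ_sum]
  rw [Finset.sum_comm]
  have inner : ∀ B ∈ univ.filter (fun B : Finset (Fin (n+1)) => (0:Fin (n+1)) ∈ B),
      (∑ A ∈ univ.filter (fun A : Finset (Fin (n+1)) => (0:Fin (n+1)) ∈ A),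
        (if B ⊆ A then ((-1:ℤ) ^ ((A \ B).card)) else 0) • eElt n B)
      = ((if B = univ then 1 else 0 : ℤ)) • eElt n B := by
    intro B hB
    simp only [mem_filter, mem_univ, true_and] at hB
    rw [← Finset.sum_smul]
    congr 1
    rw [← Finset.sum_filter, Finset.filter_filter]
    have hf : univ.filter (fun A : Finset (Fin (n+1)) => (0:Fin (n+1)) ∈ A ∧ B ⊆ A)
        = univ.filter (fun A => B ⊆ A) := by
      apply Finset.filter_congr
      intro A _
      exact ⟨fun h => h.2, fun h => ⟨h hB, h⟩⟩
    rw [hf]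
    have key : ∑ A ∈ univ.filter (fun A : Finset (Fin (n+1)) => B ⊆ A),
        (-1:ℤ) ^ ((A \ B).card) = ∑ m ∈ Bᶜ.powerset, (-1:ℤ) ^ m.card := by
      apply Finset.sum_nbij' (fun A => A \ B) (fun D => B ∪ D)
      · intro A hA
        simp only [mem_powerset]
        intro x hx
        simp only [mem_sdiff] at hx
        simp only [mem_compl]
        exact hx.2
      · intro D hD
        simp only [mem_filter, mem_univ, true_and]
        exact subset_union_left
      · intro A hA
        simp only [mem_filter, mem_univ, true_and] at hA
        exact union_sdiff_of_subset hA
      · intro D hD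
        simp only [mem_powerset] at hD
        apply union_sdiff_cancel_left
        rw [Finset.disjoint_left]
        intro x hxB hxD
        exact (mem_compl.1 (hD hxD)) hxB
      · intro A hA
        rfl
    rw [key, Finset.sum_powerset_neg_one_pow_card]
    by_cases h : B = univ
    · subst h
      simp
    · rw [if_neg h, if_neg]
      intro hc
      apply h
      rw [← compl_empty, ← hc, compl_compl]
  rw [Finset.sum_congr rfl inner]
  simp_rw [ite_smul, one_smul, zero_smul]
  rw [Finset.sum_ite_eq' (univ.filter (fun B : Finset (Fin (n+1)) => (0:Fin (n+1)) ∈ B)) univ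
    (fun B => eElt n B)]
  rw [if_pos (by simp), eElt_univ]


/-- The elements `f_A`, for `A` ranging over the subsets of
`[n]` containing the basepoint `0`, are pairwise orthogonal idempotents of the
monoid ring `ℤ[End([n])]` whose sum is the identity. -/
theorem fElt_orthogonal_idempotents (n : ℕ) :
    (∀ A : Finset (Fin (n + 1)), (0 : Fin (n + 1)) ∈ A →
      fElt n A * fElt n A = fElt n A) ∧
    (∀ A B : Finset (Fin (n + 1)), (0 : Fin (n + 1)) ∈ A →
      (0 : Fin (n + 1)) ∈ B → A ≠ B → fElt n A * fElt n B = 0) ∧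
    (∑ A ∈ Finset.univ.filter (fun A : Finset (Fin (n + 1)) =>
        (0 : Fin (n + 1)) ∈ A), fElt n A = 1) := by
  refine ⟨fun A hA => ?_, fun A B hA hB hne => ?_, sum_fElt⟩
  · rw [fElt_mul_fElt A A hA hA, if_pos rfl]
  · rw [fElt_mul_fElt B A hB hA, if_neg (fun h => hne h.symm)]
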